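/- Let p₁ and p₂ be probability density functions on ℝ (w.r.t. Lebesgue measure) and let q be a probability density. Then the squared Hellinger distance between the mixtures (1/2)p₁ + (1/2)q and (1/2)p₂ + (1/2)q is at most one half of the squared Hellinger distance between p₁ and p₂: h²((p₁+q)/2, (p₂+q)/2) ≤ (1/2)h²(p₁,p₂). -/
import Mathlib


open MeasureTheory

lemma ptwise_hellinger (a b c : ℝ) (ha : 0 ≤ a) (hb : 0 ≤ b) (hc : 0 ≤ c) :
    (Real.sqrt ((a + c) / 2) - Real.sqrt ((b + c) / 2))^2
      ≤ (1/2) * (Real.sqrt a - Real.sqrt b)^2 := by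
  set sa := Real.sqrt a with hsa'
  set sb := Real.sqrt b with hsb'
  set u := Real.sqrt ((a + c) / 2) with hu'
  set v := Real.sqrt ((b + c) / 2) with hv'
  have hsa : sa^2 = a := Real.sq_sqrt ha
  have hsb : sb^2 = b := Real.sq_sqrt hb
  have hu : u^2 = (a + c)/2 := Real.sq_sqrt (by positivity)
  have hv : v^2 = (b + c)/2 := Real.sq_sqrt (by positivity)
  have hsa0 : 0 ≤ sa := Real.sqrt_nonneg _
  have hsb0 : 0 ≤ sb := Real.sqrt_nonneg _
  have hu0 : 0 ≤ u := Real.sqrt_nonneg _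
  have hv0 : 0 ≤ v := Real.sqrt_nonneg _
  have hab : 2*(sa*sb) ≤ a + b := by nlinarith [sq_nonneg (sa - sb)]
  have h2 : (sa*sb + c)^2 ≤ (2*(u*v))^2 := by
    nlinarith [mul_nonneg hc (show (0:ℝ) ≤ a + b - 2*(sa*sb) by linarith)]
  have key : sa*sb + c ≤ 2*(u*v) := by
    have h3 := Real.sqrt_le_sqrt h2
    rwa [Real.sqrt_sq (by positivity), Real.sqrt_sq (by positivity)] at h3
  nlinarith [key]

/-- Mixing with a common component contracts the squared Hellinger distance:
`h²((p₁+q)/2, (p₂+q)/2) ≤ (1/2) h²(p₁,p₂)`, where `h²(f,g) = (1/2)∫(√f−√g)²`. -/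
theorem stmt_9 (p₁ p₂ q : ℝ → ℝ)
    (hp₁ : ∀ x, 0 ≤ p₁ x) (hp₂ : ∀ x, 0 ≤ p₂ x) (hq : ∀ x, 0 ≤ q x)
    (mp₁ : Measurable p₁) (mp₂ : Measurable p₂) (mq : Measurable q)
    (ip₁ : ∫ x, p₁ x = 1) (ip₂ : ∫ x, p₂ x = 1) (iq : ∫ x, q x = 1) :
    (1 / 2) * ∫ x, (Real.sqrt ((p₁ x + q x) / 2) - Real.sqrt ((p₂ x + q x) / 2))^2
      ≤ (1 / 2) * ((1 / 2) * ∫ x, (Real.sqrt (p₁ x) - Real.sqrt (p₂ x))^2) := by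
  have hi₁ : Integrable p₁ := by
    by_contra h
    rw [integral_undef h] at ip₁; norm_num at ip₁
  have hi₂ : Integrable p₂ := by
    by_contra h
    rw [integral_undef h] at ip₂; norm_num at ip₂
  have hbound : Integrable (fun x => p₁ x + p₂ x) := hi₁.add hi₂
  have hig : Integrable (fun x => (1/2) * (Real.sqrt (p₁ x) - Real.sqrt (p₂ x))^2) := by
    refine Integrable.mono' hbound ?_ ?_
    · exact (((mp₁.sqrt.sub mp₂.sqrt).pow_const 2).const_mul _).aestronglyMeasurable
    · filter_upwards with x
      have h1 : Real.sqrt (p₁ x) ^ 2 = p₁ x := Real.sq_sqrt (hp₁ x)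
      have h2 : Real.sqrt (p₂ x) ^ 2 = p₂ x := Real.sq_sqrt (hp₂ x)
      have h3 : 0 ≤ Real.sqrt (p₁ x) * Real.sqrt (p₂ x) :=
        mul_nonneg (Real.sqrt_nonneg _) (Real.sqrt_nonneg _)
      rw [Real.norm_eq_abs, abs_of_nonneg (by positivity)]
      nlinarith
  have hmono : (∫ x, (Real.sqrt ((p₁ x + q x) / 2) - Real.sqrt ((p₂ x + q x) / 2))^2)
      ≤ ∫ x, (1/2) * (Real.sqrt (p₁ x) - Real.sqrt (p₂ x))^2 := by
    refine integral_mono_of_nonneg ?_ hig ?_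
    · filter_upwards with x; positivity
    · filter_upwards with x
      exact ptwise_hellinger (p₁ x) (p₂ x) (q x) (hp₁ x) (hp₂ x) (hq x)
  have heq : (∫ x, (1/2) * (Real.sqrt (p₁ x) - Real.sqrt (p₂ x))^2)
      = (1/2) * ∫ x, (Real.sqrt (p₁ x) - Real.sqrt (p₂ x))^2 := by
    rw [integral_const_mul]
  rw [heq] at hmono
  linarith
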